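/- Let R be a commutative ring, let l ≥ 1 and m ≥ l + 2 be integers, and let A be an m×(m+1) matrix over R such that A_{ij} = 0 for all i ∈ [l+2, m] and j ∈ [1, l+1]. Let Ā = A_{[1,l+1]}^{[1,l+1]} be the leading (l+1)×(l+1) submatrix. Then det A^{1̂} · det Ā_{1̂}^{2̂} + det Ā · det A_{1̂}^{1̂2̂} = det A^{2̂} · det Ā_{1̂}^{1̂}. -/

import Mathlib

open Matrix

section Aux

variable {R : Type*} [CommRing R]

lemma val_succAbove' {k : ℕ} (c : Fin (k+1)) (j : Fin k) :
    (c.succAbove j).val = if j.val < c.val then j.val else j.val + 1 := by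
  rcases lt_or_ge (Fin.castSucc j) c with h | h
  · rw [Fin.succAbove_of_castSucc_lt _ _ h, if_pos (by simpa [Fin.lt_def] using h),
      Fin.coe_castSucc]
  · rw [Fin.succAbove_of_le_castSucc _ _ h, if_neg (by simp [Fin.le_def] at h; omega),
      Fin.val_succ]

lemma val_succAbove2 {k : ℕ} (c : Fin (k+2)) (j : Fin (k+1)) :
    (c.succAbove j).val = if j.val < c.val then j.val else j.val + 1 :=
  val_succAbove' c j

lemma det_cast_eq' {a b : ℕ} (h : a = b)
    (X : Matrix (Fin a) (Fin a) R) (Y : Matrix (Fin b) (Fin b) R)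
    (he : ∀ i j : Fin a, X i j = Y ⟨i.val, by omega⟩ ⟨j.val, by omega⟩) :
    X.det = Y.det := by
  subst h
  have : X = Y := by
    ext i j
    rw [he i j]
  rw [this]

lemma det_via_blocks2 {a b m : ℕ} (h : a + b = m)
    (X : Matrix (Fin m) (Fin m) R)
    (hz : ∀ i j : Fin m, a ≤ i.val → j.val < a → X i j = 0) :
    X.det = (X.submatrix (fun i : Fin a => (⟨i.val, by omega⟩ : Fin m))
               (fun j : Fin a => (⟨j.val, by omega⟩ : Fin m))).det *
            (X.submatrix (fun i : Fin b => (⟨a + i.val, by omega⟩ : Fin m))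
               (fun j : Fin b => (⟨a + j.val, by omega⟩ : Fin m))).det := by
  subst h
  rw [← det_submatrix_equiv_self finSumFinEquiv X]
  have hX : X.submatrix finSumFinEquiv finSumFinEquiv =
      fromBlocks
        (X.submatrix (fun i : Fin a => (⟨i.val, by omega⟩ : Fin (a+b)))
          (fun j : Fin a => (⟨j.val, by omega⟩ : Fin (a+b))))
        (X.submatrix (fun i : Fin a => (⟨i.val, by omega⟩ : Fin (a+b)))
          (fun j : Fin b => (⟨a + j.val, by omega⟩ : Fin (a+b))))
        0
        (X.submatrix (fun i : Fin b => (⟨a + i.val, by omega⟩ : Fin (a+b)))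
          (fun j : Fin b => (⟨a + j.val, by omega⟩ : Fin (a+b)))) := by
    ext i j
    rcases i with i | i <;> rcases j with j | j <;>
      simp only [Matrix.submatrix_apply, fromBlocks_apply₁₁, fromBlocks_apply₁₂,
        fromBlocks_apply₂₁, fromBlocks_apply₂₂, finSumFinEquiv_apply_left,
        finSumFinEquiv_apply_right, Matrix.zero_apply] <;>
    first
      | (exact hz _ _ (by simp) (by simp [Fin.is_lt]))
      | (congr 1 <;> exact Fin.ext rfl)
  rw [hX, det_fromBlocks_zero₂₁]

lemma det_via_blocks2' {a b m : ℕ} (h : a + b = m)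
    (X : Matrix (Fin m) (Fin m) R)
    (hz : ∀ i j : Fin m, i.val < a → a ≤ j.val → X i j = 0) :
    X.det = (X.submatrix (fun i : Fin a => (⟨i.val, by omega⟩ : Fin m))
               (fun j : Fin a => (⟨j.val, by omega⟩ : Fin m))).det *
            (X.submatrix (fun i : Fin b => (⟨a + i.val, by omega⟩ : Fin m))
               (fun j : Fin b => (⟨a + j.val, by omega⟩ : Fin m))).det := by
  subst h
  rw [← det_submatrix_equiv_self finSumFinEquiv X]
  have hX : X.submatrix finSumFinEquiv finSumFinEquiv =
      fromBlocks
        (X.submatrix (fun i : Fin a => (⟨i.val, by omega⟩ : Fin (a+b)))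
          (fun j : Fin a => (⟨j.val, by omega⟩ : Fin (a+b))))
        0
        (X.submatrix (fun i : Fin b => (⟨a + i.val, by omega⟩ : Fin (a+b)))
          (fun j : Fin a => (⟨j.val, by omega⟩ : Fin (a+b))))
        (X.submatrix (fun i : Fin b => (⟨a + i.val, by omega⟩ : Fin (a+b)))
          (fun j : Fin b => (⟨a + j.val, by omega⟩ : Fin (a+b)))) := by
    ext i j
    rcases i with i | i <;> rcases j with j | j <;>
      simp only [Matrix.submatrix_apply, fromBlocks_apply₁₁, fromBlocks_apply₁₂,
        fromBlocks_apply₂₁, fromBlocks_apply₂₂, finSumFinEquiv_apply_left,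
        finSumFinEquiv_apply_right, Matrix.zero_apply] <;>
    first
      | (exact hz _ _ (by simp [Fin.is_lt]) (by simp))
      | (congr 1 <;> exact Fin.ext rfl)
  rw [hX, det_fromBlocks_zero₁₂]

lemma cornerDJ {n : ℕ} (M : Matrix (Fin (n+2)) (Fin (n+2)) R) :
    M.det * ((M.submatrix Fin.succ Fin.succ).det *
        (M.submatrix (Fin.succAbove 1) (Fin.succAbove 1)).det -
      (M.submatrix (Fin.succAbove 1) Fin.succ).det *
        (M.submatrix Fin.succ (Fin.succAbove 1)).det)
    = M.det * (M.det *
        (M.submatrix (fun i : Fin n => (⟨2 + i.val, by omega⟩ : Fin (n+2)))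
          (fun j : Fin n => (⟨2 + j.val, by omega⟩ : Fin (n+2)))).det) := by
  have h10 : ((1 : Fin (n+2)) : ℕ) = 1 := Fin.val_one _
  set C : Matrix (Fin (n+2)) (Fin (n+2)) R := Matrix.of fun i j =>
    if j.val = 0 then adjugate M i 0 else if j.val = 1 then adjugate M i 1
    else if i = j then 1 else 0 with hC
  have hMC : M * C = Matrix.of fun i j =>
      if j.val = 0 then M.det * (if i.val = 0 then 1 else 0)
      else if j.val = 1 then M.det * (if i.val = 1 then 1 else 0)
      else M i j := by
    ext i j
    rw [Matrix.mul_apply]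
    by_cases h0 : j.val = 0
    · have hj : j = 0 := Fin.ext (by simpa using h0)
      subst hj
      have hs : ∀ k : Fin (n+2), M i k * C k 0 = M i k * adjugate M k 0 := fun k => by
        simp [hC]
      rw [Finset.sum_congr rfl fun k _ => hs k]
      have hma := congrFun (congrFun (mul_adjugate M) i) 0
      rw [Matrix.mul_apply] at hma
      rw [hma]
      rw [Matrix.smul_apply, Matrix.of_apply, Matrix.one_apply, smul_eq_mul]; simp only [Fin.ext_iff, Fin.val_zero, h10, one_ne_zero, ↓reduceIte]
    · by_cases h1 : j.val = 1
      · have hj : j = 1 := Fin.ext (by simpa [h10] using h1)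
        subst hj
        have hs : ∀ k : Fin (n+2), M i k * C k 1 = M i k * adjugate M k 1 := fun k => by
          simp [hC, h10]
        rw [Finset.sum_congr rfl fun k _ => hs k]
        have hma := congrFun (congrFun (mul_adjugate M) i) 1
        rw [Matrix.mul_apply] at hma
        rw [hma]
        rw [Matrix.smul_apply, Matrix.of_apply, Matrix.one_apply, smul_eq_mul]; simp only [Fin.ext_iff, Fin.val_zero, h10, one_ne_zero, ↓reduceIte]
      · have hs : ∀ k : Fin (n+2), M i k * C k j = if k = j then M i k else 0 := fun k => by
          simp only [hC, Matrix.of_apply, if_neg h0, if_neg h1]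
          split_ifs <;> simp
        rw [Finset.sum_congr rfl fun k _ => hs k,
          Finset.sum_ite_eq' Finset.univ j (fun k => M i k)]
        simp only [Matrix.of_apply, if_neg h0, if_neg h1, Finset.mem_univ, if_true]
  have hdetC : C.det = (M.submatrix Fin.succ Fin.succ).det *
        (M.submatrix (Fin.succAbove 1) (Fin.succAbove 1)).det -
      (M.submatrix (Fin.succAbove 1) Fin.succ).det *
        (M.submatrix Fin.succ (Fin.succAbove 1)).det := by
    rw [det_via_blocks2' (a := 2) (b := n) (by omega) C (fun i j hi hj => by
      simp only [hC, Matrix.of_apply]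
      rw [if_neg (by omega), if_neg (by omega), if_neg (by rw [Fin.ext_iff]; omega)])]
    have hBR : (C.submatrix (fun i : Fin n => (⟨2 + i.val, by omega⟩ : Fin (n+2)))
        (fun j : Fin n => (⟨2 + j.val, by omega⟩ : Fin (n+2)))) = 1 := by
      ext i j
      simp only [hC, Matrix.submatrix_apply, Matrix.of_apply, Matrix.one_apply]
      rw [if_neg (by omega), if_neg (by omega)]
      by_cases hij : i = j
      · subst hij; rw [if_pos rfl, if_pos rfl]
      · rw [if_neg (by rw [Fin.ext_iff]; simp; omega), if_neg hij]
    rw [hBR, det_one, mul_one, det_fin_two]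
    have e00 : (⟨((0:Fin 2)).val, by omega⟩ : Fin (n+2)) = 0 := Fin.ext rfl
    have e11 : (⟨((1:Fin 2)).val, by omega⟩ : Fin (n+2)) = 1 := Fin.ext (by simp [h10])
    simp only [Matrix.submatrix_apply, e00, e11, hC, Matrix.of_apply, Fin.val_zero, h10]
    norm_num
    rw [adjugate_fin_succ_eq_det_submatrix, adjugate_fin_succ_eq_det_submatrix,
      adjugate_fin_succ_eq_det_submatrix, adjugate_fin_succ_eq_det_submatrix]
    simp only [Fin.val_zero, h10, Fin.succAbove_zero]
    ring
  have hdetMC : (M * C).det = M.det * (M.det *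
      (M.submatrix (fun i : Fin n => (⟨2 + i.val, by omega⟩ : Fin (n+2)))
        (fun j : Fin n => (⟨2 + j.val, by omega⟩ : Fin (n+2)))).det) := by
    rw [hMC, det_via_blocks2 (a := 2) (b := n) (by omega) _ (fun i j hi hj => by
      simp only [Matrix.of_apply]
      rcases (by omega : j.val = 0 ∨ j.val = 1) with h | h
      · rw [if_pos h, if_neg (by omega)]; ring
      · rw [if_neg (by omega), if_pos h, if_neg (by omega)]; ring)]
    have hBR : ((Matrix.of fun i j : Fin (n+2) =>
        if j.val = 0 then M.det * (if i.val = 0 then 1 else 0)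
        else if j.val = 1 then M.det * (if i.val = 1 then 1 else 0)
        else M i j).submatrix (fun i : Fin n => (⟨2 + i.val, by omega⟩ : Fin (n+2)))
          (fun j : Fin n => (⟨2 + j.val, by omega⟩ : Fin (n+2))))
        = M.submatrix (fun i : Fin n => (⟨2 + i.val, by omega⟩ : Fin (n+2)))
          (fun j : Fin n => (⟨2 + j.val, by omega⟩ : Fin (n+2))) := by
      ext i j
      simp only [Matrix.submatrix_apply, Matrix.of_apply]
      rw [if_neg (by omega), if_neg (by omega)]
    rw [hBR, det_fin_two]
    simp only [Matrix.submatrix_apply, Matrix.of_apply]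
    norm_num
    ring
  calc M.det * ((M.submatrix Fin.succ Fin.succ).det *
        (M.submatrix (Fin.succAbove 1) (Fin.succAbove 1)).det -
      (M.submatrix (Fin.succAbove 1) Fin.succ).det *
        (M.submatrix Fin.succ (Fin.succAbove 1)).det)
      = M.det * C.det := by rw [hdetC]
    _ = (M * C).det := (det_mul M C).symm
    _ = _ := hdetMC

lemma det_collapse {k : ℕ} (X : Matrix (Fin (k+1)) (Fin (k+1)) R) (c₀ : Fin (k+1))
    (hrow : ∀ j, X 0 j = if j = c₀ then 1 else 0) :
    X.det = (-1)^(c₀.val) * (X.submatrix Fin.succ c₀.succAbove).det := by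
  rw [det_succ_row_zero, Finset.sum_eq_single c₀]
  · rw [hrow, if_pos rfl, mul_one]
  · intro b _ hb; rw [hrow, if_neg hb]; ring
  · intro h; exact absurd (Finset.mem_univ _) h

end Aux

/-- The map `Fin n → Fin m` enumerating, in increasing order, the `n` consecutive
indices starting at `a` (0-based). -/
def offEmb (a n m : ℕ) (h : a + n ≤ m) : Fin n → Fin m :=
  fun i => ⟨a + i.val, by have := i.isLt; omega⟩

set_option maxHeartbeats 2000000 in
/-- **Identity (5.2) of the paper.**
Let `A` be an `m × (m+1)` matrix over a commutative ring with `m ≥ l + 2`, `l ≥ 1`,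
such that `A_{ij} = 0` for `i ∈ [l+2, m]`, `j ∈ [1, l+1]` (1-based), and let
`Ā = A_{[1,l+1]}^{[1,l+1]}` be the leading `(l+1) × (l+1)` submatrix.  Then
`det A^{1̂} · det Ā_{1̂}^{2̂} + det Ā · det A_{1̂}^{1̂2̂} = det A^{2̂} · det Ā_{1̂}^{1̂}`,
where hatted superscripts (resp. subscripts) indicate deleted columns (resp. rows). -/
theorem exchange_identity {R : Type*} [CommRing R] (l m : ℕ) (hl : 1 ≤ l) (hm : l + 2 ≤ m)
    (A : Matrix (Fin m) (Fin (m + 1)) R)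
    (hz : ∀ (i : Fin m) (j : Fin (m + 1)), l + 1 ≤ (i : ℕ) → (j : ℕ) ≤ l → A i j = 0) :
    (A.submatrix id (Fin.succAbove (⟨0, by omega⟩ : Fin (m + 1)))).det *
        (A.submatrix (offEmb 1 l m (by omega))
          (fun t : Fin l => offEmb 0 (l + 1) (m + 1) (by omega)
            (Fin.succAbove (⟨1, by omega⟩ : Fin (l + 1)) t))).det +
      (A.submatrix (offEmb 0 (l + 1) m (by omega)) (offEmb 0 (l + 1) (m + 1) (by omega))).det *
        (A.submatrix (offEmb 1 (m - 1) m (by omega)) (offEmb 2 (m - 1) (m + 1) (by omega))).det =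
      (A.submatrix id (Fin.succAbove (⟨1, by omega⟩ : Fin (m + 1)))).det *
        (A.submatrix (offEmb 1 l m (by omega)) (offEmb 1 l (m + 1) (by omega))).det := by
  classical
  set G : Matrix (Fin m) (Fin (m+1)) (MvPolynomial (Fin m × Fin (m+1)) ℤ) :=
    Matrix.of fun i j =>
      if l + 1 ≤ i.val ∧ j.val ≤ l then 0 else MvPolynomial.X (i, j) with hG
  have key :
      (G.submatrix id (Fin.succAbove (⟨0, by omega⟩ : Fin (m + 1)))).det *
          (G.submatrix (offEmb 1 l m (by omega))
            (fun t : Fin l => offEmb 0 (l + 1) (m + 1) (by omega)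
              (Fin.succAbove (⟨1, by omega⟩ : Fin (l + 1)) t))).det +
        (G.submatrix (offEmb 0 (l + 1) m (by omega)) (offEmb 0 (l + 1) (m + 1) (by omega))).det *
          (G.submatrix (offEmb 1 (m - 1) m (by omega)) (offEmb 2 (m - 1) (m + 1) (by omega))).det =
        (G.submatrix id (Fin.succAbove (⟨1, by omega⟩ : Fin (m + 1)))).det *
          (G.submatrix (offEmb 1 l m (by omega)) (offEmb 1 l (m + 1) (by omega))).det := by
    have h3 : 3 ≤ m := by omega
    set x1 := (G.submatrix id (Fin.succAbove (⟨0, by omega⟩ : Fin (m + 1)))).det with hx1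
    set x2 := (G.submatrix (offEmb 1 l m (by omega))
        (fun t : Fin l => offEmb 0 (l + 1) (m + 1) (by omega)
          (Fin.succAbove (⟨1, by omega⟩ : Fin (l + 1)) t))).det with hx2
    set x3 := (G.submatrix (offEmb 0 (l + 1) m (by omega))
        (offEmb 0 (l + 1) (m + 1) (by omega))).det with hx3
    set x4 := (G.submatrix (offEmb 1 (m - 1) m (by omega))
        (offEmb 2 (m - 1) (m + 1) (by omega))).det with hx4
    set x5 := (G.submatrix id (Fin.succAbove (⟨1, by omega⟩ : Fin (m + 1)))).det with hx5
    set x6 := (G.submatrix (offEmb 1 l m (by omega)) (offEmb 1 l (m + 1) (by omega))).det with hx6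
    set U := (G.submatrix (fun i : Fin m => i)
        (fun j : Fin m => (⟨j.val, by have := j.isLt; omega⟩ : Fin (m+1)))).det with hU
    set V1 := (G.submatrix (fun i : Fin (m-1) => (⟨1 + i.val, by have := i.isLt; omega⟩ : Fin m))
        (fun j : Fin (m-1) => (⟨1 + j.val, by have := j.isLt; omega⟩ : Fin (m+1)))).det with hV1
    set V2 := (G.submatrix (fun i : Fin (m-1) => (⟨1 + i.val, by have := i.isLt; omega⟩ : Fin m))
        (fun j : Fin (m-1) =>
          (⟨if j.val < 1 then j.val else j.val + 1,
            by have := j.isLt; (try split_ifs) <;> omega⟩ : Fin (m+1)))).det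
      with hV2
    set Dd := (G.submatrix
        (fun i : Fin (m-l-1) => (⟨l + 1 + i.val, by have := i.isLt; omega⟩ : Fin m))
        (fun j : Fin (m-l-1) => (⟨l + 1 + j.val, by have := j.isLt; omega⟩ : Fin (m+1)))).det
      with hDd
    -- generic nonvanishing
    have hgen : ∀ {k : ℕ} (f : Fin k → Fin m) (g : Fin k → Fin (m+1)),
        (∀ i : Fin k, ¬(l + 1 ≤ (f i).val ∧ (g i).val ≤ l)) →
        (∀ i j : Fin k, (f i).val = (g j).val ↔ i = j) →
        (G.submatrix f g).det ≠ 0 := by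
      intro k f g hdiag hinj hzero
      have h1 : (MvPolynomial.eval (fun p : Fin m × Fin (m+1) =>
          if (p.1 : ℕ) = (p.2 : ℕ) then (1:ℤ) else 0)) (G.submatrix f g).det = 0 := by
        rw [hzero, map_zero]
      rw [RingHom.map_det] at h1
      simp only [RingHom.mapMatrix_apply] at h1
      have h2 : ((G.submatrix f g).map (MvPolynomial.eval fun p : Fin m × Fin (m+1) =>
          if (p.1 : ℕ) = (p.2 : ℕ) then (1:ℤ) else 0)) = 1 := by
        ext i j
        simp only [RingHom.mapMatrix_apply, Matrix.map_apply, Matrix.submatrix_apply, hG,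
          Matrix.of_apply,
          apply_ite (MvPolynomial.eval fun p : Fin m × Fin (m+1) =>
            if (p.1 : ℕ) = (p.2 : ℕ) then (1:ℤ) else 0),
          map_zero, MvPolynomial.eval_X, Matrix.one_apply]
        by_cases hij : i = j
        · subst hij
          rw [if_neg (hdiag i), if_pos ((hinj i i).mpr rfl), if_pos rfl]
        · rw [if_neg hij]
          split_ifs with hb hv
          · rfl
          · exact absurd ((hinj i j).mp hv) hij
          · rfl
      rw [h2, det_one] at h1
      exact one_ne_zero h1
    have hx3ne : x3 ≠ 0 := by
      rw [hx3]
      refine hgen _ _ (fun i => ?_) (fun i j => ?_)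
      · have := i.isLt; simp only [offEmb, Fin.val_mk]; omega
      · have hi := i.isLt; have hj := j.isLt
        simp only [offEmb, Fin.val_mk, Fin.ext_iff]; omega
    have hDdne : Dd ≠ 0 := by
      rw [hDd]
      refine hgen _ _ (fun i => ?_) (fun i j => ?_)
      · have := i.isLt; simp only [Fin.val_mk]; omega
      · have hi := i.isLt; have hj := j.isLt
        simp only [Fin.val_mk, Fin.ext_iff]; omega
    -- the bordered matrix
    set M : Matrix (Fin (m-1+2)) (Fin (m-1+2)) (MvPolynomial (Fin m × Fin (m+1)) ℤ) :=
      Matrix.of fun i j =>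
        if i.val = 0 then (if j.val = m then 1 else 0)
        else G ⟨i.val - 1, by have := i.isLt; omega⟩ ⟨j.val, by have := j.isLt; omega⟩ with hM
    have F1 : M.det = (-1 : MvPolynomial (Fin m × Fin (m+1)) ℤ)^m * U := by
      have hrow : ∀ j : Fin (m-1+2), M 0 j = if j = ⟨m, by omega⟩ then 1 else 0 := by
        intro j
        simp only [hM, Matrix.of_apply, Fin.val_zero, if_true, eq_self_iff_true]
        exact if_congr (by rw [Fin.ext_iff]) rfl rfl
      rw [det_collapse M ⟨m, by omega⟩ hrow]
      congr 1
      refine det_cast_eq' (by omega) _ _ (fun i j => ?_)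
      have hi := i.isLt; have hj := j.isLt
      simp only [hM, Matrix.submatrix_apply, Matrix.of_apply, Fin.val_succ]
      rw [if_neg (by omega)]
      refine congrArg₂ G (Fin.ext ?_) (Fin.ext ?_) <;>
        simp only [Fin.val_mk, val_succAbove', val_succAbove2, Fin.val_succ, id_eq] <;>
        (try split_ifs) <;> omega
    have F2 : (M.submatrix Fin.succ Fin.succ).det = x1 := by
      rw [hx1]
      refine det_cast_eq' (by omega) _ _ (fun i j => ?_)
      have hi := i.isLt; have hj := j.isLt
      simp only [hM, Matrix.submatrix_apply, Matrix.of_apply, Fin.val_succ, id_eq]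
      rw [if_neg (by omega)]
      refine congrArg₂ G (Fin.ext ?_) (Fin.ext ?_) <;>
        simp only [Fin.val_mk, val_succAbove', val_succAbove2, Fin.val_succ, Fin.val_zero, id_eq] <;>
        (try split_ifs) <;> omega
    have F3 : (M.submatrix Fin.succ (Fin.succAbove 1)).det = x5 := by
      rw [hx5]
      refine det_cast_eq' (by omega) _ _ (fun i j => ?_)
      have hi := i.isLt; have hj := j.isLt
      simp only [hM, Matrix.submatrix_apply, Matrix.of_apply, Fin.val_succ, id_eq]
      rw [if_neg (by omega)]
      refine congrArg₂ G (Fin.ext ?_) (Fin.ext ?_) <;>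
        simp only [Fin.val_mk, val_succAbove', val_succAbove2, Fin.val_succ, Fin.val_one, id_eq] <;>
        grind
    have F4 : (M.submatrix (Fin.succAbove 1) Fin.succ).det
        = (-1 : MvPolynomial (Fin m × Fin (m+1)) ℤ)^(m-1) * V1 := by
      have hrow : ∀ j : Fin (m-1+1),
          (M.submatrix (Fin.succAbove 1) Fin.succ) 0 j = if j = ⟨m-1, by omega⟩ then 1 else 0 := by
        intro j
        have hj := j.isLt
        simp only [hM, Matrix.submatrix_apply, Matrix.of_apply]
        rw [if_pos (by rw [val_succAbove2]; simp)]
        exact if_congr (by rw [Fin.ext_iff]; simp only [Fin.val_mk, Fin.val_succ]; omega) rfl rfl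
      rw [det_collapse _ ⟨m-1, by omega⟩ hrow]
      congr 1
      refine det_cast_eq' rfl _ _ (fun i j => ?_)
      have hi := i.isLt; have hj := j.isLt
      simp only [hM, Matrix.submatrix_apply, Matrix.of_apply]
      rw [if_neg (by simp only [val_succAbove', val_succAbove2, Fin.val_succ, Fin.val_one]; intro hcon; grind)]
      refine congrArg₂ G (Fin.ext ?_) (Fin.ext ?_) <;>
        simp only [Fin.val_mk, val_succAbove', val_succAbove2, Fin.val_succ, Fin.val_one, Fin.val_zero] <;>
        grind
    have F5 : (M.submatrix (Fin.succAbove 1) (Fin.succAbove 1)).det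
        = (-1 : MvPolynomial (Fin m × Fin (m+1)) ℤ)^(m-1) * V2 := by
      have hrow : ∀ j : Fin (m-1+1),
          (M.submatrix (Fin.succAbove 1) (Fin.succAbove 1)) 0 j
            = if j = ⟨m-1, by omega⟩ then 1 else 0 := by
        intro j
        have hj := j.isLt
        simp only [hM, Matrix.submatrix_apply, Matrix.of_apply]
        rw [if_pos (by rw [val_succAbove2]; simp)]
        refine if_congr ?_ rfl rfl
        rw [Fin.ext_iff]
        simp only [Fin.val_mk, val_succAbove', val_succAbove2, Fin.val_one]
        grind
      rw [det_collapse _ ⟨m-1, by omega⟩ hrow]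
      congr 1
      refine det_cast_eq' rfl _ _ (fun i j => ?_)
      have hi := i.isLt; have hj := j.isLt
      simp only [hM, Matrix.submatrix_apply, Matrix.of_apply]
      rw [if_neg (by simp only [val_succAbove', val_succAbove2, Fin.val_succ, Fin.val_one]; intro hcon; grind)]
      refine congrArg₂ G (Fin.ext ?_) (Fin.ext ?_) <;>
        simp only [Fin.val_mk, val_succAbove', val_succAbove2, Fin.val_succ, Fin.val_one, Fin.val_zero] <;>
        grind
    have F6 : (M.submatrix (fun i : Fin (m-1) => (⟨2 + i.val, by have := i.isLt; omega⟩ : Fin (m-1+2)))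
        (fun j : Fin (m-1) => (⟨2 + j.val, by have := j.isLt; omega⟩ : Fin (m-1+2)))).det = x4 := by
      rw [hx4]
      refine det_cast_eq' rfl _ _ (fun i j => ?_)
      have hi := i.isLt; have hj := j.isLt
      simp only [hM, Matrix.submatrix_apply, Matrix.of_apply, Fin.val_mk]
      rw [if_neg (by omega)]
      refine congrArg₂ G (Fin.ext ?_) (Fin.ext ?_) <;>
        simp only [Fin.val_mk, offEmb] <;> omega
    -- block factorizations
    have F7 : U = x3 * Dd := by
      rw [hU, det_via_blocks2 (a := l+1) (b := m-l-1) (by omega) _ (fun i j hi hj => by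
        simp only [hG, Matrix.submatrix_apply, Matrix.of_apply, Fin.val_mk]
        rw [if_pos ⟨hi, by omega⟩])]
      refine congrArg₂ (· * ·) ?_ ?_
      · rw [hx3]
        refine det_cast_eq' rfl _ _ (fun i j => ?_)
        simp only [Matrix.submatrix_apply]
        refine congrArg₂ G (Fin.ext ?_) (Fin.ext ?_) <;>
          simp only [Fin.val_mk, offEmb, id_eq] <;> omega
      · rw [hDd]
        exact det_cast_eq' (by omega) _ _ (fun i j => rfl)
    have F8 : V1 = x6 * Dd := by
      rw [hV1, det_via_blocks2 (a := l) (b := m-1-l) (by omega) _ (fun i j hi hj => by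
        have hi' := i.isLt; have hj' := j.isLt
        simp only [hG, Matrix.submatrix_apply, Matrix.of_apply, Fin.val_mk]
        rw [if_pos ⟨by omega, by omega⟩])]
      refine congrArg₂ (· * ·) ?_ ?_
      · rw [hx6]
        refine det_cast_eq' rfl _ _ (fun i j => ?_)
        simp only [Matrix.submatrix_apply]
        refine congrArg₂ G (Fin.ext ?_) (Fin.ext ?_) <;>
          simp only [Fin.val_mk, offEmb] <;> omega
      · rw [hDd]
        refine det_cast_eq' (by omega) _ _ (fun i j => ?_)
        simp only [Matrix.submatrix_apply]
        refine congrArg₂ G (Fin.ext ?_) (Fin.ext ?_) <;>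
          simp only [Fin.val_mk] <;> omega
    have F9 : V2 = x2 * Dd := by
      rw [hV2, det_via_blocks2 (a := l) (b := m-1-l) (by omega) _ (fun i j hi hj => by
        have hi' := i.isLt; have hj' := j.isLt
        simp only [hG, Matrix.submatrix_apply, Matrix.of_apply, Fin.val_mk]
        rw [if_pos ⟨by omega, by (try split_ifs) <;> omega⟩])]
      refine congrArg₂ (· * ·) ?_ ?_
      · rw [hx2]
        refine det_cast_eq' rfl _ _ (fun i j => ?_)
        have hi := i.isLt; have hj := j.isLt
        simp only [Matrix.submatrix_apply]
        refine congrArg₂ G (Fin.ext ?_) (Fin.ext ?_) <;>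
          simp only [Fin.val_mk, offEmb, val_succAbove'] <;> (try split_ifs) <;> omega
      · rw [hDd]
        refine det_cast_eq' (by omega) _ _ (fun i j => ?_)
        have hi := i.isLt; have hj := j.isLt
        simp only [Matrix.submatrix_apply]
        refine congrArg₂ G (Fin.ext ?_) (Fin.ext ?_) <;>
          simp only [Fin.val_mk] <;> (try split_ifs) <;> omega
    -- Desnanot–Jacobi and conclusion
    have raw := cornerDJ M
    rw [F1, F2, F3, F4, F5, F6] at raw
    have hUne : U ≠ 0 := by rw [F7]; exact mul_ne_zero hx3ne hDdne
    have hMne : (-1 : MvPolynomial (Fin m × Fin (m+1)) ℤ)^m * U ≠ 0 :=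
      mul_ne_zero (pow_ne_zero _ (by norm_num)) hUne
    have cancelled := mul_left_cancel₀ hMne raw
    rw [F7, F8, F9] at cancelled
    have hpow : (-1 : MvPolynomial (Fin m × Fin (m+1)) ℤ)^m = (-1)^(m-1) * (-1) := by
      rw [← pow_succ]
      congr 1
      omega
    rw [hpow] at cancelled
    set ε := (-1 : MvPolynomial (Fin m × Fin (m+1)) ℤ)^(m-1) with hε
    have hε2 : ε * ε = 1 := by
      rw [hε, ← pow_add]
      exact Even.neg_one_pow ⟨m-1, rfl⟩
    refine mul_left_cancel₀ hDdne ?_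
    linear_combination ε * cancelled - (x1*x2*Dd + x3*x4*Dd - x5*x6*Dd) * hε2

  -- specialization to A
  have hφ : ∀ {k : ℕ} (f : Fin k → Fin m) (g : Fin k → Fin (m+1)),
      (MvPolynomial.eval₂Hom (Int.castRingHom R) (fun p : Fin m × Fin (m+1) => A p.1 p.2))
        (G.submatrix f g).det = (A.submatrix f g).det := by
    intro k f g
    rw [RingHom.map_det]
    congr 1
    ext i j
    simp only [RingHom.mapMatrix_apply, Matrix.map_apply, Matrix.submatrix_apply, hG, Matrix.of_apply]
    split_ifs with h
    · rw [map_zero]; exact (hz _ _ h.1 h.2).symm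
    · exact MvPolynomial.eval₂Hom_X' _ _ _
  have hkey := congrArg
    (MvPolynomial.eval₂Hom (Int.castRingHom R) (fun p : Fin m × Fin (m+1) => A p.1 p.2)) key
  simpa only [map_add, _root_.map_mul, hφ] using hkey
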